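/- Let k be a field and c(x,y) = Σ_{j=0}^{m} a_j(y) x^j ∈ k[x,y] a nonzero polynomial. For a k-linear endomorphism q of k(x), define q_c ∈ End_k(k(x)) by q_c(z) = Σ_{j=0}^{m} a_j(x)·q(x^j·z) for z ∈ k(x). Assume k is algebraically closed. Then the map End_k(k(x)) → End_k(k(x)), q ↦ q_c, is surjective: for every k-linear map p : k(x) → k(x) there exists a k-linear q with q_c = p. -/

import Mathlib

open Polynomial


noncomputable section Stmt8Aux

variable (k : Type*) [Field k]

namespace Stmt8

/-- `x` as an element of `k(x)`. -/
def xh : RatFunc k := algebraMap (Polynomial k) (RatFunc k) X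

theorem xh_def : xh k = algebraMap (Polynomial k) (RatFunc k) X := rfl

theorem algebraMap_C (a : k) :
    algebraMap (Polynomial k) (RatFunc k) (C a) = algebraMap k (RatFunc k) a := by
  rw [IsScalarTower.algebraMap_apply k (Polynomial k) (RatFunc k) a, Polynomial.algebraMap_eq]

theorem algebraMap_monomial (s : ℕ) (a : k) :
    algebraMap (Polynomial k) (RatFunc k) (monomial s a) =
      algebraMap k (RatFunc k) a * xh k ^ s := by
  rw [← C_mul_X_pow_eq_monomial, map_mul, map_pow, algebraMap_C, xh_def]

/-- Coefficientwise multiplication by `x` on `PolynomialModule k (RatFunc k)`,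
as a `k[X]`-linear map (where `X` acts by shift). -/
def V : PolynomialModule k (RatFunc k) →ₗ[Polynomial k] PolynomialModule k (RatFunc k) where
  toFun := PolynomialModule.map k (LinearMap.mulLeft k (xh k))
  map_add' f g := map_add _ f g
  map_smul' r f := by
    have := PolynomialModule.map_smul (R' := k) (R := k) (LinearMap.mulLeft k (xh k)) r f
    simpa using this

theorem V_single (j : ℕ) (m : RatFunc k) :
    V k (PolynomialModule.single k j m) = PolynomialModule.single k j (xh k * m) := by
  show PolynomialModule.map k (LinearMap.mulLeft k (xh k)) (PolynomialModule.single k j m) = _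
  rw [PolynomialModule.map_single]
  rfl

theorem Vpow_single (j : ℕ) (m : RatFunc k) :
    (V k ^ j) (PolynomialModule.single k 0 m) =
      PolynomialModule.single k 0 (xh k ^ j * m) := by
  induction j generalizing m with
  | zero => simp
  | succ n ih =>
      rw [pow_succ', Module.End.mul_apply, ih, V_single]
      congr 1
      ring

theorem equivPolynomial_V (f : PolynomialModule k (RatFunc k)) :
    PolynomialModule.equivPolynomial (V k f) =
      C (xh k) * PolynomialModule.equivPolynomial f := by
  induction f using PolynomialModule.induction_linear with
  | zero => rw [map_zero, map_zero, mul_zero]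
  | add f g hf hg => rw [map_add, map_add, map_add, mul_add, hf, hg]
  | single j m =>
      rw [V_single, PolynomialModule.equivPolynomial_single,
        PolynomialModule.equivPolynomial_single, C_mul_monomial]

theorem equivPolynomial_Vpow (j : ℕ) (f : PolynomialModule k (RatFunc k)) :
    PolynomialModule.equivPolynomial ((V k ^ j) f) =
      C (xh k) ^ j * PolynomialModule.equivPolynomial f := by
  induction j generalizing f with
  | zero => simp
  | succ n ih =>
      rw [pow_succ', Module.End.mul_apply, equivPolynomial_V, ih, pow_succ']
      ring

theorem equivPolynomial_smul (r : Polynomial k) (f : PolynomialModule k (RatFunc k)) :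
    PolynomialModule.equivPolynomial (r • f) =
      r.map (algebraMap k (RatFunc k)) * PolynomialModule.equivPolynomial f := by
  induction f using PolynomialModule.induction_linear with
  | zero => rw [smul_zero, map_zero, mul_zero]
  | add f g hf hg => rw [smul_add, map_add, map_add, mul_add, hf, hg]
  | single j m =>
      induction r using Polynomial.induction_on' with
      | add a b ha hb => rw [add_smul, map_add, ha, hb, Polynomial.map_add, add_mul]
      | monomial s a =>
          rw [PolynomialModule.monomial_smul_single, PolynomialModule.equivPolynomial_single,
            Polynomial.map_monomial, PolynomialModule.equivPolynomial_single,
            Polynomial.monomial_mul_monomial, Algebra.smul_def]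

/-- `RatFunc k` is a Baer module over `k[X]`. -/
theorem baer : Module.Baer (Polynomial k) (RatFunc k) := by
  intro I g
  obtain ⟨d, rfl⟩ := Submodule.IsPrincipal.principal I
  by_cases hd : d = 0
  · subst hd
    refine ⟨0, fun x mem => ?_⟩
    have hz : (⟨x, mem⟩ : Submodule.span (Polynomial k) {(0 : Polynomial k)}) = 0 := by
      apply Subtype.ext
      obtain ⟨r, rfl⟩ := Submodule.mem_span_singleton.mp mem
      simp
    simp [hz]
  · have hd' : algebraMap (Polynomial k) (RatFunc k) d ≠ 0 := fun h =>
      hd (RatFunc.algebraMap_injective k (by simpa using h))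
    set gd := g ⟨d, Submodule.mem_span_singleton_self d⟩ with hgd
    refine ⟨LinearMap.toSpanSingleton (Polynomial k) (RatFunc k)
      (gd / algebraMap (Polynomial k) (RatFunc k) d), fun x mem => ?_⟩
    obtain ⟨r, rfl⟩ := Submodule.mem_span_singleton.mp mem
    have h1 : (⟨r • d, mem⟩ : Submodule.span (Polynomial k) {d}) =
        r • (⟨d, Submodule.mem_span_singleton_self d⟩ :
          Submodule.span (Polynomial k) {d}) := Subtype.ext rfl
    rw [LinearMap.toSpanSingleton_apply, h1, LinearMap.map_smul, ← hgd, smul_eq_mul,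
      Algebra.smul_def, Algebra.smul_def, map_mul, mul_assoc,
      mul_comm (algebraMap (Polynomial k) (RatFunc k) d), div_mul_cancel₀ _ hd']

variable {k}

/-- Evaluation `f ↦ ∑ i, x^i * p (f i)` as a `k`-linear map. -/
def EvP (p : RatFunc k →ₗ[k] RatFunc k) :
    PolynomialModule k (RatFunc k) →ₗ[k] RatFunc k :=
  ((Polynomial.leval (xh k)).restrictScalars k) ∘ₗ
    (PolynomialModule.equivPolynomial :
        PolynomialModule k (RatFunc k) ≃ₗ[k] Polynomial (RatFunc k)).toLinearMap ∘ₗ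
      PolynomialModule.map k p

theorem EvP_single (p : RatFunc k →ₗ[k] RatFunc k) (j : ℕ) (m : RatFunc k) :
    EvP p (PolynomialModule.single k j m) = xh k ^ j * p m := by
  show ((Polynomial.leval (xh k)).restrictScalars k)
    (PolynomialModule.equivPolynomial
      (PolynomialModule.map k p (PolynomialModule.single k j m))) = _
  rw [PolynomialModule.map_single, PolynomialModule.equivPolynomial_single]
  show (monomial j (p m)).eval (xh k) = _
  rw [eval_monomial, mul_comm]

/-- `EvP p` upgraded to a `k[X]`-linear map. -/
def phat (p : RatFunc k →ₗ[k] RatFunc k) :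
    PolynomialModule k (RatFunc k) →ₗ[Polynomial k] RatFunc k where
  toFun := EvP p
  map_add' f g := map_add _ f g
  map_smul' r f := by
    simp only [RingHom.id_apply]
    induction f using PolynomialModule.induction_linear with
    | zero => rw [smul_zero, map_zero, smul_zero]
    | add f g hf hg => rw [smul_add, map_add, hf, hg, map_add, smul_add]
    | single j m =>
        induction r using Polynomial.induction_on' with
        | add a b ha hb => rw [add_smul, map_add, ha, hb, add_smul]
        | monomial s a =>
            rw [PolynomialModule.monomial_smul_single, EvP_single, EvP_single,
              LinearMap.map_smul, Algebra.smul_def ((monomial s a : Polynomial k)),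
              algebraMap_monomial, Algebra.smul_def a (p m), pow_add]
            ring

theorem phat_single (p : RatFunc k →ₗ[k] RatFunc k) (j : ℕ) (m : RatFunc k) :
    phat p (PolynomialModule.single k j m) = xh k ^ j * p m :=
  EvP_single p j m

end Stmt8

end Stmt8Aux

/-- **Convolution Lemma.** Let `k` be an algebraically closed field and
`c(x,y) = Σ_{j} a_j(y) x^j ∈ k[x,y]` nonzero (coded as a polynomial in `x` with
coefficients `a_j ∈ k[y]`).  For a `k`-linear endomorphism `q` of `k(x)`, define
`q_c(z) = Σ_j a_j(x)·q(x^j·z)`.  Then the map `q ↦ q_c` on `End_k(k(x))` is surjective: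
for every `k`-linear `p : k(x) → k(x)` there is a `k`-linear `q` with `q_c = p`. -/
theorem stmt8 (k : Type*) [Field k] [IsAlgClosed k]
    (c : Polynomial (Polynomial k)) (hc : c ≠ 0)
    (p : RatFunc k →ₗ[k] RatFunc k) :
    ∃ q : RatFunc k →ₗ[k] RatFunc k, ∀ z : RatFunc k,
      ∑ j ∈ Finset.range (c.natDegree + 1),
          algebraMap (Polynomial k) (RatFunc k) (c.coeff j) *
            q ((algebraMap (Polynomial k) (RatFunc k) X) ^ j * z)
        = p z := by
  classical
  set L : PolynomialModule k (RatFunc k) →ₗ[Polynomial k] PolynomialModule k (RatFunc k) :=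
    ∑ j ∈ Finset.range (c.natDegree + 1),
      LinearMap.lsmul (Polynomial k) (PolynomialModule k (RatFunc k)) (c.coeff j) ∘ₗ
        (Stmt8.V k ^ j) with hLdef
  set cK : Polynomial (RatFunc k) :=
    ∑ j ∈ Finset.range (c.natDegree + 1),
      (c.coeff j).map (algebraMap k (RatFunc k)) * C (Stmt8.xh k) ^ j with hcKdef
  have hLapp : ∀ f, L f = ∑ j ∈ Finset.range (c.natDegree + 1),
      (c.coeff j) • ((Stmt8.V k ^ j) f) := by
    intro f
    rw [hLdef, LinearMap.sum_apply]
    exact Finset.sum_congr rfl fun j _ => rfl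
  have heL : ∀ f, PolynomialModule.equivPolynomial (L f) =
      cK * PolynomialModule.equivPolynomial f := by
    intro f
    rw [hLapp, map_sum, hcKdef, Finset.sum_mul]
    refine Finset.sum_congr rfl fun j _ => ?_
    rw [Stmt8.equivPolynomial_smul, Stmt8.equivPolynomial_Vpow, mul_assoc]
  have hcK : cK ≠ 0 := by
    have h1 : c.coeff c.natDegree ≠ 0 := fun h => hc (Polynomial.leadingCoeff_eq_zero.mp h)
    have ht : (c.coeff c.natDegree).coeff (c.coeff c.natDegree).natDegree ≠ 0 :=
      Polynomial.leadingCoeff_ne_zero.mpr h1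
    set t := (c.coeff c.natDegree).natDegree with htdef
    intro h0
    have hct : cK.coeff t = 0 := by rw [h0, Polynomial.coeff_zero]
    rw [hcKdef, Polynomial.finset_sum_coeff] at hct
    have hct' : algebraMap (Polynomial k) (RatFunc k)
        (∑ j ∈ Finset.range (c.natDegree + 1), monomial j ((c.coeff j).coeff t)) = 0 := by
      rw [map_sum, ← hct]
      refine Finset.sum_congr rfl fun j _ => ?_
      rw [← Polynomial.C_pow, Polynomial.coeff_mul_C, Polynomial.coeff_map,
        Stmt8.algebraMap_monomial]
    have hd0 : (∑ j ∈ Finset.range (c.natDegree + 1),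
        monomial j ((c.coeff j).coeff t)) = 0 :=
      RatFunc.algebraMap_injective k (by rw [hct', map_zero])
    apply ht
    have h2 := congrArg (fun u => Polynomial.coeff u c.natDegree) hd0
    simpa [Polynomial.finset_sum_coeff, Polynomial.coeff_monomial,
      Finset.sum_ite_eq', Finset.self_mem_range_succ] using h2
  have hL : Function.Injective L := by
    intro f g hfg
    have h2 := congrArg (fun u => PolynomialModule.equivPolynomial (R := k) u) hfg
    rw [heL, heL] at h2
    exact PolynomialModule.equivPolynomial.injective (mul_left_cancel₀ hcK h2)
  obtain ⟨h, hh⟩ := (Stmt8.baer k).extension_property L hL (Stmt8.phat p)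
  refine ⟨(h.restrictScalars k) ∘ₗ
    (PolynomialModule.lsingle k 0 : RatFunc k →ₗ[k] PolynomialModule k (RatFunc k)),
    fun z => ?_⟩
  have key : ∑ j ∈ Finset.range (c.natDegree + 1),
      algebraMap (Polynomial k) (RatFunc k) (c.coeff j) *
        h (PolynomialModule.single k 0 ((Stmt8.xh k) ^ j * z)) = p z := by
    have e1 : ∀ j, algebraMap (Polynomial k) (RatFunc k) (c.coeff j) *
        h (PolynomialModule.single k 0 ((Stmt8.xh k) ^ j * z)) =
        h ((c.coeff j) • ((Stmt8.V k ^ j) (PolynomialModule.single k 0 z))) := by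
      intro j
      rw [Stmt8.Vpow_single, LinearMap.map_smul, Algebra.smul_def]
    rw [Finset.sum_congr rfl (fun j _ => e1 j), ← map_sum, ← hLapp]
    have h3 := LinearMap.congr_fun hh (PolynomialModule.single k 0 z)
    rw [LinearMap.comp_apply] at h3
    rw [h3, Stmt8.phat_single, pow_zero, one_mul]
  exact key
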